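/- Let π ∈ S_{n+1} and φ = Φ(π). Then Des(φ) ⊆ {π⁻¹(n+1) − 1, π⁻¹(n+1)} if and only if π is both ascending-to-max and non-nesting. -/

import Mathlib

/-- Cyclic addition of the constant `k` to all values of a permutation of
`{1, …, n}` (identifying positions/values with `Fin n`, 1-based position `i`
corresponding to `i - 1 : Fin n`): `(addConst π k) i = π i + k (mod n)`. -/
def addConst {n : ℕ} (π : Equiv.Perm (Fin n)) (k : ℕ) : Equiv.Perm (Fin n) :=
  π.trans (finRotate n ^ k)

/-- The linking permutation `Φ(π) = π⁻¹ ∘ (π + 1)`, i.e.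
`Φ(π) i = π⁻¹ (π i + 1)` with cyclic value addition (`n + 1 ≡ 1`). -/
def linkPerm {n : ℕ} (π : Equiv.Perm (Fin n)) : Equiv.Perm (Fin n) :=
  (π.trans (finRotate n)).trans π.symm

/-- A permutation has exactly one orbit: iterating it reaches any element from
any element. -/
def OneOrbit {n : ℕ} (φ : Equiv.Perm (Fin n)) : Prop :=
  ∀ x y : Fin n, ∃ m : ℕ, (φ ^ m) x = y

/-- The descent set of a permutation of `{1, …, n}`, as a set of 1-based
positions: `i ∈ [1, n-1]` is a descent iff `φ(i) > φ(i+1)`.  The 1-based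
position `i` corresponds to the element `i - 1 : Fin n`. -/
def desSet {n : ℕ} (φ : Equiv.Perm (Fin n)) : Set ℕ :=
  {i : ℕ | ∃ h : i < n, 1 ≤ i ∧
    φ ⟨i, h⟩ < φ ⟨i - 1, Nat.lt_of_le_of_lt (Nat.sub_le i 1) h⟩}

/-- `π` is the suffix array of the word `w` of length `n`: `π i` is the
(0-based) starting position of the `i`-th smallest suffix of `w` in the
lexicographic order on lists (a proper prefix precedes its extensions). -/
def IsSuffixArray {α : Type*} [LinearOrder α] {n : ℕ} (w : List α)
    (π : Equiv.Perm (Fin n)) : Prop :=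
  w.length = n ∧ ∀ i j : Fin n, i < j → w.drop (π i : ℕ) < w.drop (π j : ℕ)

/-- `π` is the Burrows–Wheeler array of the word `w` of length `n`: `π i` is
the (0-based) starting position of the `i`-th smallest cyclic shift of `w`. -/
def IsBWArray {α : Type*} [LinearOrder α] {n : ℕ} (w : List α)
    (π : Equiv.Perm (Fin n)) : Prop :=
  w.length = n ∧ ∀ i j : Fin n, i < j → w.rotate (π i : ℕ) < w.rotate (π j : ℕ)

/-- A word is primitive iff it is not a proper power of another word:
`w = v^k` implies `k = 1`. -/
def Primitive {α : Type*} (w : List α) : Prop :=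
  ∀ (v : List α) (k : ℕ), w = (List.replicate k v).flatten → k = 1

/-- From `σ ∈ S_n`, the permutation `π' = (n+1) σ(1) ⋯ σ(n) ∈ S_{n+1}`:
position `1` (element `0 : Fin (n+1)`) is sent to the value `n + 1`
(element `Fin.last n`), and position `i + 1` is sent to the value `σ(i)`. -/
def appendMax {n : ℕ} (σ : Equiv.Perm (Fin n)) : Equiv.Perm (Fin (n + 1)) :=
  ((finSuccEquiv n).trans σ.optionCongr).trans (finSuccEquiv' (Fin.last n)).symm

/-- Binomial coefficient with integer arguments, which is `0` when the lower
index is negative or exceeds the upper index. -/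
def intChoose (m r : ℤ) : ℕ :=
  if 0 ≤ r ∧ r ≤ m then m.toNat.choose r.toNat else 0

/-- `π ∈ S_{n+1}` is ascending-to-max.  Values are 1-based: the value
`i ∈ [1, n-1]` corresponds to `x.castSucc` where `x : Fin n` satisfies
`(x : ℕ) + 1 = i` … i.e. `x = i - 1`; the value `i + 1` corresponds to
`x.succ`, and the value `n + 1` corresponds to `Fin.last n`. -/
def AscendingToMax {n : ℕ} (π : Equiv.Perm (Fin (n + 1))) : Prop :=
  ∀ x : Fin n, (x : ℕ) + 1 < n →
    (π.symm x.castSucc < π.symm (Fin.last n) →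
      π.symm x.succ < π.symm (Fin.last n) →
      π.symm x.castSucc < π.symm x.succ) ∧
    (π.symm (Fin.last n) < π.symm x.castSucc →
      π.symm (Fin.last n) < π.symm x.succ →
      π.symm x.succ < π.symm x.castSucc)

/-- `π ∈ S_{n+1}` is non-nesting.  Values are 1-based: the values `i, j ∈ [1, n]`
correspond to `x.castSucc, y.castSucc` with `x, y : Fin n`, and the values
`i + 1, j + 1` to `x.succ, y.succ`. -/
def NonNesting {n : ℕ} (π : Equiv.Perm (Fin (n + 1))) : Prop :=
  ∀ x y : Fin n, π.symm x.castSucc < π.symm y.castSucc →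
    ((π.symm x.castSucc < π.symm x.succ ∧ π.symm y.castSucc < π.symm y.succ) ∨
      (π.symm x.succ < π.symm x.castSucc ∧ π.symm y.succ < π.symm y.castSucc)) →
    π.symm x.succ < π.symm y.succ


section LinkAux

variable {n : ℕ} (π : Equiv.Perm (Fin (n + 1)))

private lemma link_apply {p : Fin (n + 1)} {x : Fin n} (h : π p = x.castSucc) :
    linkPerm π p = π.symm x.succ := by
  simp only [linkPerm, Equiv.trans_apply, h, finRotate_succ_apply, Fin.coeSucc_eq_succ]

private lemma link_ne {p : Fin (n + 1)} (hp : p ≠ π.symm (Fin.last n)) :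
    linkPerm π p ≠ p := by
  have hπ : π p ≠ Fin.last n := by
    intro h
    exact hp (by rw [← h, Equiv.symm_apply_apply])
  obtain ⟨x, hx⟩ := Fin.exists_castSucc_eq.mpr hπ
  rw [link_apply π hx.symm]
  intro h
  have h2 : x.succ = x.castSucc := by
    have := congrArg π h
    rw [Equiv.apply_symm_apply, ← hx] at this
    exact this
  exact (Fin.castSucc_lt_succ (i := x)).ne' h2

private lemma link_step
    (H : desSet (linkPerm π) ⊆
      {((π.symm (Fin.last n) : Fin (n + 1)) : ℕ),
        ((π.symm (Fin.last n) : Fin (n + 1)) : ℕ) + 1})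
    {p q : Fin (n + 1)} (hpq : (q : ℕ) = (p : ℕ) + 1)
    (hp : p ≠ π.symm (Fin.last n)) (hq : q ≠ π.symm (Fin.last n)) :
    linkPerm π p < linkPerm π q := by
  rcases lt_or_ge (linkPerm π p) (linkPerm π q) with h | h
  · exact h
  exfalso
  have hne : p ≠ q := by
    intro e
    rw [e] at hpq
    omega
  have hlt : linkPerm π q < linkPerm π p :=
    lt_of_le_of_ne h (fun e => hne ((linkPerm π).injective e).symm)
  have hmem : (q : ℕ) ∈ desSet (linkPerm π) := by
    refine ⟨q.isLt, by omega, ?_⟩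
    have e2 : (⟨(q : ℕ) - 1, Nat.lt_of_le_of_lt (Nat.sub_le (q : ℕ) 1) q.isLt⟩ : Fin (n + 1)) = p :=
      Fin.ext (show (q : ℕ) - 1 = (p : ℕ) by omega)
    rw [Fin.eta, e2]
    exact hlt
  have := H hmem
  simp only [Set.mem_insert_iff, Set.mem_singleton_iff] at this
  rcases this with h1 | h1
  · exact hq (Fin.ext h1)
  · exact hp (Fin.ext (by omega))

private lemma link_mono1
    (H : desSet (linkPerm π) ⊆
      {((π.symm (Fin.last n) : Fin (n + 1)) : ℕ),
        ((π.symm (Fin.last n) : Fin (n + 1)) : ℕ) + 1}) :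
    ∀ (k : ℕ) (hk : k < n + 1) (p : Fin (n + 1)), (p : ℕ) < k →
      k < ((π.symm (Fin.last n) : Fin (n + 1)) : ℕ) →
      linkPerm π p < linkPerm π ⟨k, hk⟩ := by
  intro k
  induction k with
  | zero => intro _ _ h; omega
  | succ k IH =>
    intro hk p hp hkm
    have hkk : k < n + 1 := by omega
    have hQm : (⟨k, hkk⟩ : Fin (n + 1)) ≠ π.symm (Fin.last n) := by
      intro e
      have := congrArg Fin.val e
      simp only [Fin.val_mk] at this
      omega
    have hQ'm : (⟨k + 1, hk⟩ : Fin (n + 1)) ≠ π.symm (Fin.last n) := by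
      intro e
      have := congrArg Fin.val e
      simp only [Fin.val_mk] at this
      omega
    rcases Nat.lt_or_ge (p : ℕ) k with h | h
    · exact (IH hkk p h (by omega)).trans
        (link_step π H (p := ⟨k, hkk⟩) (q := ⟨k + 1, hk⟩) rfl hQm hQ'm)
    · have hpe : p = ⟨k, hkk⟩ := Fin.ext (show (p : ℕ) = k by omega)
      rw [hpe]
      exact link_step π H (p := ⟨k, hkk⟩) (q := ⟨k + 1, hk⟩) rfl hQm hQ'm

private lemma link_mono2
    (H : desSet (linkPerm π) ⊆
      {((π.symm (Fin.last n) : Fin (n + 1)) : ℕ),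
        ((π.symm (Fin.last n) : Fin (n + 1)) : ℕ) + 1}) :
    ∀ (k : ℕ) (hk : k < n + 1) (p : Fin (n + 1)),
      ((π.symm (Fin.last n) : Fin (n + 1)) : ℕ) < (p : ℕ) → (p : ℕ) < k →
      linkPerm π p < linkPerm π ⟨k, hk⟩ := by
  intro k
  induction k with
  | zero => intro _ _ _ h; omega
  | succ k IH =>
    intro hk p hmp hp
    have hkk : k < n + 1 := by omega
    have hQm : (⟨k, hkk⟩ : Fin (n + 1)) ≠ π.symm (Fin.last n) := by
      intro e
      have := congrArg Fin.val e
      simp only [Fin.val_mk] at this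
      omega
    have hQ'm : (⟨k + 1, hk⟩ : Fin (n + 1)) ≠ π.symm (Fin.last n) := by
      intro e
      have := congrArg Fin.val e
      simp only [Fin.val_mk] at this
      omega
    rcases Nat.lt_or_ge (p : ℕ) k with h | h
    · exact (IH hkk p hmp h).trans
        (link_step π H (p := ⟨k, hkk⟩) (q := ⟨k + 1, hk⟩) rfl hQm hQ'm)
    · have hpe : p = ⟨k, hkk⟩ := Fin.ext (show (p : ℕ) = k by omega)
      rw [hpe]
      exact link_step π H (p := ⟨k, hkk⟩) (q := ⟨k + 1, hk⟩) rfl hQm hQ'm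

private lemma link_ltA
    (H : desSet (linkPerm π) ⊆
      {((π.symm (Fin.last n) : Fin (n + 1)) : ℕ),
        ((π.symm (Fin.last n) : Fin (n + 1)) : ℕ) + 1}) :
    ∀ (k : ℕ) (p : Fin (n + 1)), (p : ℕ) ≤ k → p < π.symm (Fin.last n) →
      p < linkPerm π p := by
  intro k
  induction k using Nat.strong_induction_on with
  | _ k IH =>
  intro p hp hpm
  by_contra hc
  push_neg at hc
  have hne : linkPerm π p ≠ p := link_ne π hpm.ne
  have h1 : linkPerm π p < p := lt_of_le_of_ne hc hne
  have h1v : ((linkPerm π p : Fin (n + 1)) : ℕ) < (p : ℕ) := h1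
  have hpv : (p : ℕ) < ((π.symm (Fin.last n) : Fin (n + 1)) : ℕ) := hpm
  have h2 : linkPerm π (linkPerm π p) < linkPerm π p := by
    have := link_mono1 π H (p : ℕ) p.isLt (linkPerm π p) h1v hpv
    rwa [Fin.eta] at this
  have h3 : linkPerm π p < linkPerm π (linkPerm π p) := by
    rcases Nat.eq_zero_or_pos k with hk0 | hk0
    · omega
    · exact IH ((linkPerm π p : Fin (n + 1)) : ℕ) (by omega) (linkPerm π p) le_rfl
        (h1.trans hpm)
  exact absurd h3 (asymm h2)

private lemma link_ltB
    (H : desSet (linkPerm π) ⊆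
      {((π.symm (Fin.last n) : Fin (n + 1)) : ℕ),
        ((π.symm (Fin.last n) : Fin (n + 1)) : ℕ) + 1}) :
    ∀ (k : ℕ) (p : Fin (n + 1)), n - (p : ℕ) ≤ k → π.symm (Fin.last n) < p →
      linkPerm π p < p := by
  intro k
  induction k using Nat.strong_induction_on with
  | _ k IH =>
  intro p hp hpm
  by_contra hc
  push_neg at hc
  have hne : linkPerm π p ≠ p := link_ne π hpm.ne'
  have h1 : p < linkPerm π p := lt_of_le_of_ne hc (fun e => hne e.symm)
  have h1v : (p : ℕ) < ((linkPerm π p : Fin (n + 1)) : ℕ) := h1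
  have hpv : ((π.symm (Fin.last n) : Fin (n + 1)) : ℕ) < (p : ℕ) := hpm
  have hlt : ((linkPerm π p : Fin (n + 1)) : ℕ) < n + 1 := (linkPerm π p).isLt
  have h2 : linkPerm π p < linkPerm π (linkPerm π p) := by
    have := link_mono2 π H ((linkPerm π p : Fin (n + 1)) : ℕ) (linkPerm π p).isLt p hpv h1v
    rwa [Fin.eta] at this
  have h3 : linkPerm π (linkPerm π p) < linkPerm π p :=
    IH (n - ((linkPerm π p : Fin (n + 1)) : ℕ)) (by omega) (linkPerm π p) le_rfl
      (hpm.trans h1)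
  exact absurd h3 (asymm h2)

end LinkAux

/-- For `π ∈ S_{n+1}` and `φ = Φ(π)`:
`Des(φ) ⊆ {π⁻¹(n+1) - 1, π⁻¹(n+1)}` iff `π` is both ascending-to-max and
non-nesting. -/
theorem desSet_subset_iff_ascendingToMax_nonNesting {n : ℕ}
    (π : Equiv.Perm (Fin (n + 1))) :
    desSet (linkPerm π) ⊆
        {((π.symm (Fin.last n) : Fin (n + 1)) : ℕ),
          ((π.symm (Fin.last n) : Fin (n + 1)) : ℕ) + 1} ↔
      (AscendingToMax π ∧ NonNesting π)  := by
  constructor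
  · intro H
    constructor
    · intro x hx
      have hp : π (π.symm x.castSucc) = x.castSucc := π.apply_symm_apply _
      constructor
      · intro h1 _
        have := link_ltA π H ((π.symm x.castSucc : Fin (n + 1)) : ℕ) (π.symm x.castSucc)
          le_rfl h1
        rwa [link_apply π hp] at this
      · intro h1 _
        have := link_ltB π H (n - ((π.symm x.castSucc : Fin (n + 1)) : ℕ)) (π.symm x.castSucc)
          le_rfl h1
        rwa [link_apply π hp] at this
    · intro x y hxy hcase
      have hpx : π (π.symm x.castSucc) = x.castSucc := π.apply_symm_apply _
      have hpy : π (π.symm y.castSucc) = y.castSucc := π.apply_symm_apply _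
      have hy_ne : π.symm y.castSucc ≠ π.symm (Fin.last n) := by
        intro e
        exact (Fin.castSucc_lt_last y).ne (π.symm.injective e)
      have hx_ne : π.symm x.castSucc ≠ π.symm (Fin.last n) := by
        intro e
        exact (Fin.castSucc_lt_last x).ne (π.symm.injective e)
      rcases lt_or_gt_of_ne hy_ne with hq | hq
      · have := link_mono1 π H ((π.symm y.castSucc : Fin (n + 1)) : ℕ) (Fin.is_lt _)
          (π.symm x.castSucc) hxy hq
        rw [Fin.eta, link_apply π hpx, link_apply π hpy] at this
        exact this
      · rcases lt_or_gt_of_ne hx_ne with hp' | hp'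
        · exfalso
          rcases hcase with ⟨_, hb⟩ | ⟨hb, _⟩
          · have h2 := link_ltB π H (n - ((π.symm y.castSucc : Fin (n + 1)) : ℕ))
              (π.symm y.castSucc) le_rfl hq
            rw [link_apply π hpy] at h2
            exact absurd hb (asymm h2)
          · have h2 := link_ltA π H ((π.symm x.castSucc : Fin (n + 1)) : ℕ)
              (π.symm x.castSucc) le_rfl hp'
            rw [link_apply π hpx] at h2
            exact absurd hb (asymm h2)
        · have := link_mono2 π H ((π.symm y.castSucc : Fin (n + 1)) : ℕ) (Fin.is_lt _)
            (π.symm x.castSucc) hp' hxy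
          rw [Fin.eta, link_apply π hpx, link_apply π hpy] at this
          exact this
  · rintro ⟨hA, hN⟩ i hi
    obtain ⟨h, h1, hdes⟩ := hi
    simp only [Set.mem_insert_iff, Set.mem_singleton_iff]
    by_contra hcon
    push_neg at hcon
    obtain ⟨hc1, hc2⟩ := hcon
    have hq : i - 1 < n + 1 := by omega
    have hdes' : linkPerm π ⟨i, h⟩ < linkPerm π ⟨i - 1, hq⟩ := hdes
    set m := π.symm (Fin.last n) with hm
    set Q : Fin (n + 1) := ⟨i - 1, hq⟩ with hQdef
    set Q' : Fin (n + 1) := ⟨i, h⟩ with hQ'def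
    have hQm : Q ≠ m := by
      intro e
      have := congrArg Fin.val e
      simp only [hQdef, Fin.val_mk] at this
      omega
    have hQ'm : Q' ≠ m := by
      intro e
      have := congrArg Fin.val e
      simp only [hQ'def, Fin.val_mk] at this
      omega
    have hπQ : π Q ≠ Fin.last n := by
      intro e
      exact hQm (by rw [hm, ← e, Equiv.symm_apply_apply])
    have hπQ' : π Q' ≠ Fin.last n := by
      intro e
      exact hQ'm (by rw [hm, ← e, Equiv.symm_apply_apply])
    obtain ⟨x, hx⟩ := Fin.exists_castSucc_eq.mpr hπQ
    obtain ⟨y, hy⟩ := Fin.exists_castSucc_eq.mpr hπQ'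
    rw [link_apply π hx.symm, link_apply π hy.symm] at hdes'
    have hQx : π.symm x.castSucc = Q := by rw [hx, Equiv.symm_apply_apply]
    have hQy : π.symm y.castSucc = Q' := by rw [hy, Equiv.symm_apply_apply]
    have hQQ' : Q < Q' := by
      rw [Fin.lt_def]
      simp only [hQdef, hQ'def, Fin.val_mk]
      omega
    have hbQ : π.symm x.succ ≠ Q := by
      intro e
      rw [← hQx] at e
      exact (Fin.castSucc_lt_succ (i := x)).ne' (π.symm.injective e)
    have hb'Q' : π.symm y.succ ≠ Q' := by
      intro e
      rw [← hQy] at e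
      exact (Fin.castSucc_lt_succ (i := y)).ne' (π.symm.injective e)
    rcases lt_or_gt_of_ne hbQ with hb | hb
    · rcases lt_or_gt_of_ne hb'Q' with hb' | hb'
      · have := hN x y (by rw [hQx, hQy]; exact hQQ')
          (Or.inr ⟨by rw [hQx]; exact hb, by rw [hQy]; exact hb'⟩)
        exact absurd hdes' (asymm this)
      · exact absurd hdes' (asymm ((hb.trans hQQ').trans hb'))
    · rcases lt_or_gt_of_ne hb'Q' with hb' | hb'
      · -- Q < b, b' < Q' : contradiction via AscendingToMax
        have hmQ : (m : ℕ) ≠ (Q : ℕ) := fun e => hQm (Fin.ext e.symm)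
        have hmQ' : (m : ℕ) ≠ (Q' : ℕ) := fun e => hQ'm (Fin.ext e.symm)
        have hQval : (Q' : ℕ) = (Q : ℕ) + 1 := by
          simp only [hQdef, hQ'def, Fin.val_mk]
          omega
        rcases (show Q' < m ∨ m < Q by
            rw [Fin.lt_def, Fin.lt_def]
            omega) with hcase2 | hcase2
        · have hblt : π.symm y.succ < m := hb'.trans hcase2
          have hyne : y.succ ≠ Fin.last n := by
            intro e
            rw [e] at hblt
            exact absurd hblt (lt_irrefl _)
          have hylt : (y : ℕ) + 1 < n := by
            have h5 := y.isLt
            have h6 : (y : ℕ) + 1 ≠ n := by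
              intro e
              exact hyne (Fin.ext (by simp [Fin.val_succ, Fin.val_last, e]))
            omega
          have := (hA y hylt).1 (by rw [hQy]; exact hcase2) hblt
          rw [hQy] at this
          exact absurd this (asymm hb')
        · rcases eq_or_ne x.succ (Fin.last n) with hxe | hxe
          · rw [hxe, ← hm] at hb
            exact absurd hb (asymm hcase2)
          · have hxlt : (x : ℕ) + 1 < n := by
              have h5 := x.isLt
              have h6 : (x : ℕ) + 1 ≠ n := by
                intro e
                exact hxe (Fin.ext (by simp [Fin.val_succ, Fin.val_last, e]))
              omega
            have hmb : m < π.symm x.succ := hcase2.trans hb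
            have := (hA x hxlt).2 (by rw [hQx]; exact hcase2) hmb
            rw [hQx] at this
            exact absurd this (asymm hb)
      · have := hN x y (by rw [hQx, hQy]; exact hQQ')
          (Or.inl ⟨by rw [hQx]; exact hb, by rw [hQy]; exact hb'⟩)
        exact absurd hdes' (asymm this)
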